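/- arXiv:2310.13658 — 3 statements merged into one kernel-verified Lean document; each statement's English description precedes it below -/
import Mathlib

section
/- For every integer n ≥ 6, the number of partitions of n with no parts equal to 1, at most one part equal to 2, and whose largest part occurs more than once equals -∑_{k=5}^{n+5} S^{(5)}_{n+5,k} · μ(k); equivalently, (p(n) - 2p(n-1) + p(n-2)) - (p(n-4) - 2p(n-5) + p(n-6)) = -∑_{k=5}^{n+5} S^{(5)}_{n+5,k} · μ(k). -/
open Finset

/-- The number of partitions of `n`. -/
def p (n : ℕ) : ℕ := Fintype.card (Nat.Partition n)

/-- The partition function extended by zero to negative integer arguments. -/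
def pz (m : ℤ) : ℤ := if 0 ≤ m then (p m.toNat : ℤ) else 0

/-- `S r n k` : the total number of parts equal to `k` in all partitions of `n`
whose parts are all at least `r`. -/
def S (r n k : ℕ) : ℕ :=
  ∑ P : Nat.Partition n, if ∀ i ∈ P.parts, r ≤ i then P.parts.count k else 0

/-! ### basic multiset facts -/

lemma msum_le_of_le {s t : Multiset ℕ} (h : s ≤ t) : s.sum ≤ t.sum := by
  obtain ⟨u, rfl⟩ := Multiset.le_iff_exists_add.mp h
  simp [Multiset.sum_add]

lemma mcard_le_sum {s : Multiset ℕ} (h : ∀ i ∈ s, 1 ≤ i) : Multiset.card s ≤ s.sum := by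
  induction s using Multiset.induction with
  | empty => simp
  | cons a t ih =>
    simp only [Multiset.card_cons, Multiset.sum_cons]
    have ha := h a (Multiset.mem_cons_self a t)
    have := ih (fun i hi => h i (Multiset.mem_cons_of_mem hi))
    omega

lemma msup_mem {s : Multiset ℕ} (h : s ≠ 0) : s.sup ∈ s := by
  induction s using Multiset.induction with
  | empty => simp at h
  | cons a t ih =>
    rcases eq_or_ne t 0 with rfl | ht
    · simp
    · rcases le_total (t.sup) a with hle | hle
      · simp [Multiset.sup_cons, sup_eq_left.mpr hle]
      · rw [Multiset.sup_cons, sup_eq_right.mpr hle]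
        exact Multiset.mem_cons_of_mem (ih ht)

lemma msum_erase {s : Multiset ℕ} {a : ℕ} (h : a ∈ s) : (s.erase a).sum = s.sum - a := by
  conv_rhs => rw [← Multiset.cons_erase h]
  simp [Multiset.sum_cons]

/-! ### counting infrastructure -/

/-- split a subtype count by a further condition -/
lemma card_split {α : Type*} [Fintype α] (p q : α → Prop) :
    Nat.card {x // p x ∧ q x} + Nat.card {x // p x ∧ ¬ q x} = Nat.card {x // p x} := by
  classical
  simp only [Nat.card_eq_fintype_card, Fintype.card_subtype]
  rw [← Finset.card_filter_add_card_filter_not (s := Finset.univ.filter p) q]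
  rw [Finset.filter_filter, Finset.filter_filter]

/-- removing a fixed submultiset `t₀` -/
lemma card_remove (t₀ : Multiset ℕ) (h0 : ∀ i ∈ t₀, 0 < i) (n : ℕ)
    (Q R : Multiset ℕ → Prop) (hQR : ∀ t, Q (t₀ + t) ↔ R t) :
    Nat.card {P : Nat.Partition (n + t₀.sum) // t₀ ≤ P.parts ∧ Q P.parts} =
      Nat.card {P : Nat.Partition n // R P.parts} := by
  symm
  refine Nat.card_eq_of_bijective (fun PR =>
    (⟨⟨t₀ + PR.1.parts,
        fun {i} hi => (Multiset.mem_add.mp hi).elim (h0 i) (PR.1.parts_pos),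
        by rw [Multiset.sum_add, PR.1.parts_sum, Nat.add_comm]⟩,
      Multiset.le_add_right _ _, (hQR _).mpr PR.2⟩ :
        {P : Nat.Partition (n + t₀.sum) // t₀ ≤ P.parts ∧ Q P.parts})) ⟨?_, ?_⟩
  · rintro ⟨P1, h1⟩ ⟨P2, h2⟩ hh
    have h' : t₀ + P1.parts = t₀ + P2.parts := congrArg (fun x => x.1.parts) hh
    exact Subtype.ext (Nat.Partition.ext (add_left_cancel h'))
  · rintro ⟨Q', hle, hQ⟩
    obtain ⟨u, hu⟩ := Multiset.le_iff_exists_add.mp hle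
    have hsum : u.sum = n := by
      have := Q'.parts_sum
      rw [hu, Multiset.sum_add] at this
      omega
    refine ⟨⟨⟨u, fun {i} hi => Q'.parts_pos (by rw [hu]; exact Multiset.mem_add.mpr (Or.inr hi)), hsum⟩,
      (hQR u).mp (by rwa [← hu])⟩, ?_⟩
    exact Subtype.ext (Nat.Partition.ext hu.symm)
noncomputable def cntGE (r m : ℕ) : ℕ := Nat.card {P : Nat.Partition m // ∀ i ∈ P.parts, r ≤ i}

noncomputable def czGE (r : ℕ) (j : ℤ) : ℤ := if 0 ≤ j then (cntGE r j.toNat : ℤ) else 0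

lemma cntGE_one (m : ℕ) : cntGE 1 m = p m := by
  rw [cntGE, p, ← Nat.card_eq_fintype_card]
  exact Nat.card_congr (Equiv.subtypeUnivEquiv (fun P i hi => P.parts_pos hi))

lemma czGE_succ (k : ℕ) (hk : 0 < k) (j : ℤ) :
    czGE (k+1) j = czGE k j - czGE k (j - k) := by
  rcases lt_or_ge j 0 with hj | hj
  · have : j - k < 0 := by omega
    simp [czGE, not_le.mpr hj, not_le.mpr this]
    intro h; omega
  rcases lt_or_ge j (k : ℤ) with hjk | hjk
  · have h1 : j - k < 0 := by omega
    have h2 : j.toNat < k := by omega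
    simp only [czGE, if_pos hj, if_neg (not_le.mpr h1), sub_zero]
    norm_cast
    apply Nat.card_congr
    apply Equiv.subtypeEquivRight
    intro P
    constructor
    · exact fun h i hi => le_trans (Nat.le_succ k) (h i hi)
    · intro h i hi
      exfalso
      have : i ≤ P.parts.sum := Multiset.le_sum_of_mem hi
      rw [P.parts_sum] at this
      have := h i hi
      omega
  · -- k ≤ j
    obtain ⟨d, rfl⟩ : ∃ d : ℕ, j = d + k := by
      refine ⟨(j - k).toNat, by omega⟩
    have h0 : (0:ℤ) ≤ (d:ℤ) + k := by positivity
    have hsub : ((d:ℤ) + k - k) = (d:ℤ) := by ring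
    simp only [czGE, if_pos h0, hsub, if_pos (Int.ofNat_nonneg d), Int.toNat_natCast]
    have htn : ((d:ℤ) + k).toNat = d + k := by omega
    rw [htn]
    have hsplit := card_split (α := Nat.Partition (d + k))
      (fun P => ∀ i ∈ P.parts, k ≤ i) (fun P => k ∈ P.parts)
    -- reorder: we need arguments swapped; use a different split
    have hsplit2 := card_split (α := Nat.Partition (d + k))
      (fun P => ∀ i ∈ P.parts, k ≤ i) (fun P => k ∉ P.parts)
    have e1 : Nat.card {P : Nat.Partition (d + k) // (∀ i ∈ P.parts, k ≤ i) ∧ k ∉ P.parts}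
        = cntGE (k+1) (d+k) := by
      apply Nat.card_congr
      apply Equiv.subtypeEquivRight
      intro P
      constructor
      · rintro ⟨h1, h2⟩ i hi
        have := h1 i hi
        rcases Nat.eq_or_lt_of_le this with h | h
        · exact absurd (h ▸ hi) h2
        · omega
      · intro h
        refine ⟨fun i hi => le_trans (Nat.le_succ k) (h i hi), fun hmem => ?_⟩
        have := h k hmem
        omega
    have e2 : Nat.card {P : Nat.Partition (d + k) // (∀ i ∈ P.parts, k ≤ i) ∧ ¬ k ∉ P.parts}
        = cntGE k d := by
      have e2' : Nat.card {P : Nat.Partition (d + k) // ({k} : Multiset ℕ) ≤ P.parts ∧ ∀ i ∈ P.parts, k ≤ i}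
          = cntGE k d := by
        have := card_remove ({k} : Multiset ℕ) (by simpa using hk) d
          (fun s => ∀ i ∈ s, k ≤ i) (fun s => ∀ i ∈ s, k ≤ i) ?_
        · change Nat.card {P : Nat.Partition (d + k) // _} = _ at this
          exact this
        · intro t
          rw [Multiset.singleton_add]
          constructor
          · exact fun h i hi => h i (Multiset.mem_cons_of_mem hi)
          · intro h i hi
            rcases Multiset.mem_cons.mp hi with rfl | hi
            · exact le_refl _
            · exact h i hi
      rw [← e2']
      apply Nat.card_congr
      apply Equiv.subtypeEquivRight
      intro P
      rw [Multiset.singleton_le, not_not, and_comm]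
    rw [e1] at hsplit2
    rw [e2] at hsplit2
    have : cntGE k (d + k) = Nat.card {P : Nat.Partition (d + k) // ∀ i ∈ P.parts, k ≤ i} := rfl
    omega

def q2z (j : ℤ) : ℤ := pz j - pz (j-1)
def r3z (j : ℤ) : ℤ := q2z j - q2z (j-2)
def r4z (j : ℤ) : ℤ := r3z j - r3z (j-3)
def q5z (j : ℤ) : ℤ := r4z j - r4z (j-4)

lemma czGE_1 (j : ℤ) : czGE 1 j = pz j := by
  unfold czGE pz
  rcases le_or_gt 0 j with h | h
  · simp [if_pos h, cntGE_one]
  · simp [if_neg (not_le.mpr h)]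

lemma czGE_2 (j : ℤ) : czGE 2 j = q2z j := by
  have := czGE_succ 1 (by norm_num) j
  rw [q2z, ← czGE_1, ← czGE_1]
  norm_num at this ⊢
  exact this

lemma czGE_3 (j : ℤ) : czGE 3 j = r3z j := by
  have := czGE_succ 2 (by norm_num) j
  rw [r3z, ← czGE_2, ← czGE_2]
  norm_num at this ⊢
  exact this

lemma czGE_4 (j : ℤ) : czGE 4 j = r4z j := by
  have := czGE_succ 3 (by norm_num) j
  rw [r4z, ← czGE_3, ← czGE_3]
  norm_num at this ⊢
  exact this

lemma czGE_5 (j : ℤ) : czGE 5 j = q5z j := by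
  have := czGE_succ 4 (by norm_num) j
  rw [q5z, ← czGE_4, ← czGE_4]
  norm_num at this ⊢
  exact this

lemma czGE_neg (r : ℕ) {j : ℤ} (h : j < 0) : czGE r j = 0 := by
  simp [czGE, not_le.mpr h]
/-! ### the A-count -/

noncomputable def Acard (m : ℕ) : ℕ :=
  Nat.card {P : Nat.Partition m // (∀ i ∈ P.parts, 2 ≤ i) ∧ P.parts.count 2 ≤ 1}

noncomputable def Az (j : ℤ) : ℤ := if 0 ≤ j then (Acard j.toNat : ℤ) else 0

lemma Acard_eq (m : ℕ) :
    (Acard m : ℤ) = czGE 2 m - czGE 2 ((m:ℤ) - 4) := by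
  have hsplit := card_split (α := Nat.Partition m)
    (fun P => ∀ i ∈ P.parts, 2 ≤ i) (fun P => P.parts.count 2 ≤ 1)
  have hA : Nat.card {P : Nat.Partition m // (∀ i ∈ P.parts, 2 ≤ i) ∧ P.parts.count 2 ≤ 1}
      = Acard m := rfl
  have hc : Nat.card {P : Nat.Partition m // ∀ i ∈ P.parts, 2 ≤ i} = cntGE 2 m := rfl
  -- the complement count
  have hcomp : Nat.card {P : Nat.Partition m // (∀ i ∈ P.parts, 2 ≤ i) ∧ ¬ P.parts.count 2 ≤ 1}
      = if 4 ≤ m then cntGE 2 (m - 4) else 0 := by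
    rcases le_or_gt 4 m with h4 | h4
    · obtain ⟨d, rfl⟩ : ∃ d : ℕ, m = d + 4 := ⟨m - 4, by omega⟩
      have key := card_remove (Multiset.replicate 2 2)
        (fun i hi => by rw [Multiset.eq_of_mem_replicate hi]; norm_num) d
        (fun s => ∀ i ∈ s, 2 ≤ i) (fun s => ∀ i ∈ s, 2 ≤ i) ?_
      · have hsum : (Multiset.replicate 2 2).sum = 4 := by simp [Multiset.sum_replicate]
        rw [hsum] at key
        rw [if_pos (by omega : 4 ≤ d + 4), show d + 4 - 4 = d by omega,
          show cntGE 2 d = Nat.card {P : Nat.Partition d // ∀ i ∈ P.parts, 2 ≤ i} from rfl, ← key]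
        apply Nat.card_congr
        apply Equiv.subtypeEquivRight
        intro P
        constructor
        · rintro ⟨h1, h2⟩
          exact ⟨Multiset.le_count_iff_replicate_le.mp (by omega), h1⟩
        · rintro ⟨h1, h2⟩
          have := Multiset.le_count_iff_replicate_le.mpr h1
          exact ⟨h2, by omega⟩
      · intro t
        constructor
        · intro h i hi; exact h i (by rw [Multiset.mem_add]; exact Or.inr hi)
        · intro h i hi
          rcases Multiset.mem_add.mp hi with hi | hi
          · rw [Multiset.eq_of_mem_replicate hi]
          · exact h i hi
    · rw [if_neg (by omega)]
      rw [Nat.card_eq_zero]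
      left
      constructor
      rintro ⟨P, hge, hc2⟩
      have hrep : Multiset.replicate 2 2 ≤ P.parts := by
        rw [← Multiset.le_count_iff_replicate_le]; omega
      have := msum_le_of_le hrep
      rw [P.parts_sum] at this
      simp [Multiset.sum_replicate] at this
      omega
  rcases le_or_gt 4 m with h4 | h4
  · have h1 : czGE 2 (m:ℤ) = (cntGE 2 m : ℤ) := by simp [czGE]
    have h2 : czGE 2 ((m:ℤ) - 4) = (cntGE 2 (m - 4) : ℤ) := by
      rw [czGE, if_pos (by omega)]
      congr 2
      omega
    rw [h1, h2, if_pos h4] at *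
    omega
  · have h1 : czGE 2 (m:ℤ) = (cntGE 2 m : ℤ) := by simp [czGE]
    have h2 : czGE 2 ((m:ℤ) - 4) = 0 := czGE_neg 2 (by omega)
    rw [if_neg (by omega)] at hcomp
    rw [h1, h2] at *
    omega

lemma Az_eq (j : ℤ) : Az j = q2z j - q2z (j - 4) := by
  rcases le_or_gt 0 j with hj | hj
  · rw [Az, if_pos hj, ← czGE_2, ← czGE_2]
    have := Acard_eq j.toNat
    rwa [show ((j.toNat : ℤ)) = j by omega] at this
  · rw [Az, if_neg (not_le.mpr hj), ← czGE_2, ← czGE_2, czGE_neg 2 hj, czGE_neg 2 (by omega)]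
    ring
/-! ### the max-unique bijection -/

lemma sum_pos_ne_zero {s : Multiset ℕ} (h : 0 < s.sum) : s ≠ 0 := by
  rintro rfl; simp at h

lemma card_maxUniq (n : ℕ) (hn : 6 ≤ n) :
    Nat.card {P : Nat.Partition n // ((∀ i ∈ P.parts, 2 ≤ i) ∧ P.parts.count 2 ≤ 1) ∧
      (∃ m ∈ P.parts, (∀ i ∈ P.parts, i ≤ m) ∧ P.parts.count m = 1)} = Acard (n-1) := by
  symm
  rw [Acard]
  -- facts about elements of the source
  have src_facts : ∀ P : Nat.Partition (n-1), (∀ i ∈ P.parts, 2 ≤ i) → P.parts.count 2 ≤ 1 →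
      P.parts.sup ∈ P.parts ∧ 3 ≤ P.parts.sup := by
    intro P hge hc2
    have hne : P.parts ≠ 0 := sum_pos_ne_zero (by rw [P.parts_sum]; omega)
    have hM := msup_mem hne
    refine ⟨hM, ?_⟩
    by_contra h3
    -- all parts equal 2
    have hall : ∀ b ∈ P.parts, b = 2 := by
      intro b hb
      have h1 := hge b hb
      have h2 : b ≤ P.parts.sup := Multiset.le_sup hb
      have h4 := hge _ hM
      omega
    have hrep : P.parts = Multiset.replicate (Multiset.card P.parts) 2 :=
      Multiset.eq_replicate_card.mpr hall
    have hcnt : P.parts.count 2 = Multiset.card P.parts := by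
      rw [hrep]; simp
    have hsum : P.parts.sum = 2 * Multiset.card P.parts := by
      rw [hrep]; simp [Multiset.sum_replicate]; ring
    have := P.parts_sum
    omega
  have hpos : ∀ PR : {P : Nat.Partition (n-1) // (∀ i ∈ P.parts, 2 ≤ i) ∧ P.parts.count 2 ≤ 1},
      ∀ {i : ℕ}, i ∈ (PR.1.parts.sup + 1) ::ₘ PR.1.parts.erase PR.1.parts.sup → 0 < i := by
    intro PR i hi
    rcases Multiset.mem_cons.mp hi with rfl | hi
    · omega
    · exact PR.1.parts_pos (Multiset.mem_of_mem_erase hi)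
  have hsum : ∀ PR : {P : Nat.Partition (n-1) // (∀ i ∈ P.parts, 2 ≤ i) ∧ P.parts.count 2 ≤ 1},
      ((PR.1.parts.sup + 1) ::ₘ PR.1.parts.erase PR.1.parts.sup).sum = n := by
    intro PR
    obtain ⟨hM, hM3⟩ := src_facts PR.1 PR.2.1 PR.2.2
    have h1 : PR.1.parts.sup ≤ PR.1.parts.sum := Multiset.le_sum_of_mem hM
    have h2 := PR.1.parts_sum
    rw [Multiset.sum_cons, msum_erase hM, h2]
    omega
  have hcond : ∀ PR : {P : Nat.Partition (n-1) // (∀ i ∈ P.parts, 2 ≤ i) ∧ P.parts.count 2 ≤ 1},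
      (∀ i ∈ (PR.1.parts.sup + 1) ::ₘ PR.1.parts.erase PR.1.parts.sup, 2 ≤ i) ∧
        ((PR.1.parts.sup + 1) ::ₘ PR.1.parts.erase PR.1.parts.sup).count 2 ≤ 1 := by
    intro PR
    obtain ⟨hM, hM3⟩ := src_facts PR.1 PR.2.1 PR.2.2
    constructor
    · intro i hi
      rcases Multiset.mem_cons.mp hi with rfl | hi
      · omega
      · exact PR.2.1 i (Multiset.mem_of_mem_erase hi)
    · rw [Multiset.count_cons_of_ne (by omega), Multiset.count_erase_of_ne (by omega)]
      exact PR.2.2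
  have hmax : ∀ PR : {P : Nat.Partition (n-1) // (∀ i ∈ P.parts, 2 ≤ i) ∧ P.parts.count 2 ≤ 1},
      ∃ m ∈ (PR.1.parts.sup + 1) ::ₘ PR.1.parts.erase PR.1.parts.sup,
        (∀ i ∈ (PR.1.parts.sup + 1) ::ₘ PR.1.parts.erase PR.1.parts.sup, i ≤ m) ∧
          ((PR.1.parts.sup + 1) ::ₘ PR.1.parts.erase PR.1.parts.sup).count m = 1 := by
    intro PR
    obtain ⟨hM, hM3⟩ := src_facts PR.1 PR.2.1 PR.2.2
    refine ⟨PR.1.parts.sup + 1, Multiset.mem_cons_self _ _, ?_, ?_⟩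
    · intro i hi
      rcases Multiset.mem_cons.mp hi with rfl | hi
      · omega
      · have : i ≤ PR.1.parts.sup := Multiset.le_sup (Multiset.mem_of_mem_erase hi)
        omega
    · rw [Multiset.count_cons_self]
      have h0 : PR.1.parts.count (PR.1.parts.sup + 1) = 0 := by
        rw [Multiset.count_eq_zero]
        intro hmem
        have := Multiset.le_sup hmem
        omega
      have := Multiset.count_le_of_le (PR.1.parts.sup + 1) (Multiset.erase_le PR.1.parts.sup PR.1.parts)
      omega
  refine Nat.card_eq_of_bijective (fun PR =>
    ⟨⟨(PR.1.parts.sup + 1) ::ₘ PR.1.parts.erase PR.1.parts.sup, hpos PR, hsum PR⟩,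
      hcond PR, hmax PR⟩) ⟨?_, ?_⟩
  · -- injectivity
    rintro ⟨P1, h1⟩ ⟨P2, h2⟩ hh
    obtain ⟨hM1, hM13⟩ := src_facts P1 h1.1 h1.2
    obtain ⟨hM2, hM23⟩ := src_facts P2 h2.1 h2.2
    have heq : (P1.parts.sup + 1) ::ₘ P1.parts.erase P1.parts.sup
        = (P2.parts.sup + 1) ::ₘ P2.parts.erase P2.parts.sup :=
      congrArg (fun x => x.1.parts) hh
    have hsup : P1.parts.sup = P2.parts.sup := by
      have e1 : ((P1.parts.sup + 1) ::ₘ P1.parts.erase P1.parts.sup).sup = P1.parts.sup + 1 := by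
        rw [Multiset.sup_cons]
        have : (P1.parts.erase P1.parts.sup).sup ≤ P1.parts.sup + 1 := by
          apply Multiset.sup_le.mpr
          intro b hb
          have := Multiset.le_sup (Multiset.mem_of_mem_erase hb)
          omega
        omega
      have e2 : ((P2.parts.sup + 1) ::ₘ P2.parts.erase P2.parts.sup).sup = P2.parts.sup + 1 := by
        rw [Multiset.sup_cons]
        have : (P2.parts.erase P2.parts.sup).sup ≤ P2.parts.sup + 1 := by
          apply Multiset.sup_le.mpr
          intro b hb
          have := Multiset.le_sup (Multiset.mem_of_mem_erase hb)
          omega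
        omega
      have := congrArg Multiset.sup heq
      rw [e1, e2] at this
      omega
    rw [hsup] at heq
    have herase := (Multiset.cons_inj_right _).mp heq
    apply Subtype.ext
    apply Nat.Partition.ext
    calc P1.parts = P1.parts.sup ::ₘ P1.parts.erase P1.parts.sup := (Multiset.cons_erase hM1).symm
      _ = P2.parts.sup ::ₘ P1.parts.erase P2.parts.sup := by rw [hsup]
      _ = P2.parts.sup ::ₘ P2.parts.erase P2.parts.sup := by rw [herase]
      _ = P2.parts := Multiset.cons_erase hM2
  · -- surjectivity
    rintro ⟨Q, ⟨hge, hc2⟩, M', hM'mem, hub', hcnt⟩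
    have hcntE : (Q.parts.erase M').count M' = 0 := by
      have := Multiset.count_erase_self M' Q.parts
      omega
    have hnotin : M' ∉ Q.parts.erase M' := Multiset.count_eq_zero.mp hcntE
    have hesum : (Q.parts.erase M').sum = Q.parts.sum - M' := msum_erase hM'mem
    have hMsum : M' ≤ Q.parts.sum := Multiset.le_sum_of_mem hM'mem
    have hQsum := Q.parts_sum
    have hM'2 : 2 ≤ M' := hge _ hM'mem
    have hM'4 : 4 ≤ M' := by
      by_contra hlt
      have hall2 : ∀ b ∈ Q.parts.erase M', b = 2 := by
        intro b hb
        have hbQ := Multiset.mem_of_mem_erase hb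
        have h1 := hge b hbQ
        have h2 := hub' b hbQ
        have hbne : b ≠ M' := fun hEq => hnotin (hEq ▸ hb)
        omega
      have hrep : Q.parts.erase M' = Multiset.replicate (Multiset.card (Q.parts.erase M')) 2 :=
        Multiset.eq_replicate_card.mpr hall2
      have hcnt2 : (Q.parts.erase M').count 2 = Multiset.card (Q.parts.erase M') := by
        rw [hrep]; simp
      have hle : (Q.parts.erase M').count 2 ≤ Q.parts.count 2 :=
        Multiset.count_le_of_le 2 (Multiset.erase_le _ _)
      have hsum2 : (Q.parts.erase M').sum = 2 * Multiset.card (Q.parts.erase M') := by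
        rw [hrep]; simp [Multiset.sum_replicate]; ring
      omega
    -- build the preimage
    have hpos : ∀ {i : ℕ}, i ∈ (M' - 1) ::ₘ Q.parts.erase M' → 0 < i := by
      intro i hi
      rcases Multiset.mem_cons.mp hi with rfl | hi
      · omega
      · exact Q.parts_pos (Multiset.mem_of_mem_erase hi)
    have hsum : ((M' - 1) ::ₘ Q.parts.erase M').sum = n - 1 := by
      rw [Multiset.sum_cons, hesum, hQsum]
      omega
    have hcondA : (∀ i ∈ (M' - 1) ::ₘ Q.parts.erase M', 2 ≤ i) ∧
        ((M' - 1) ::ₘ Q.parts.erase M').count 2 ≤ 1 := by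
      constructor
      · intro i hi
        rcases Multiset.mem_cons.mp hi with rfl | hi
        · omega
        · exact hge i (Multiset.mem_of_mem_erase hi)
      · rw [Multiset.count_cons_of_ne (by omega), Multiset.count_erase_of_ne (by omega)]
        exact hc2
    refine ⟨⟨⟨(M' - 1) ::ₘ Q.parts.erase M', hpos, hsum⟩, hcondA⟩, ?_⟩
    apply Subtype.ext
    apply Nat.Partition.ext
    show (((M' - 1) ::ₘ Q.parts.erase M').sup + 1) ::ₘ
        ((M' - 1) ::ₘ Q.parts.erase M').erase (((M' - 1) ::ₘ Q.parts.erase M').sup) = Q.parts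
    have husup : ((M' - 1) ::ₘ Q.parts.erase M').sup = M' - 1 := by
      apply le_antisymm
      · apply Multiset.sup_le.mpr
        intro b hb
        rcases Multiset.mem_cons.mp hb with rfl | hb
        · exact le_refl _
        · have h2 := hub' b (Multiset.mem_of_mem_erase hb)
          have hbne : b ≠ M' := fun hEq => hnotin (hEq ▸ hb)
          omega
      · exact Multiset.le_sup (Multiset.mem_cons_self _ _)
    rw [husup, Multiset.erase_cons_head, show M' - 1 + 1 = M' by omega]
    exact Multiset.cons_erase hM'mem
/-! ### the count of partitions with repeated max -/

lemma cardB (n : ℕ) (hn : 6 ≤ n) :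
    (Nat.card {P : Nat.Partition n // (∀ i ∈ P.parts, 2 ≤ i) ∧ P.parts.count 2 ≤ 1 ∧
      (∃ m ∈ P.parts, (∀ i ∈ P.parts, i ≤ m) ∧ 2 ≤ P.parts.count m)} : ℤ)
      = Az (n : ℤ) - Az ((n:ℤ) - 1) := by
  have hsplit := card_split (α := Nat.Partition n)
    (fun P => (∀ i ∈ P.parts, 2 ≤ i) ∧ P.parts.count 2 ≤ 1)
    (fun P => ∃ m ∈ P.parts, (∀ i ∈ P.parts, i ≤ m) ∧ 2 ≤ P.parts.count m)
  have e0 : Nat.card {P : Nat.Partition n // ((∀ i ∈ P.parts, 2 ≤ i) ∧ P.parts.count 2 ≤ 1) ∧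
      (∃ m ∈ P.parts, (∀ i ∈ P.parts, i ≤ m) ∧ 2 ≤ P.parts.count m)}
      = Nat.card {P : Nat.Partition n // (∀ i ∈ P.parts, 2 ≤ i) ∧ P.parts.count 2 ≤ 1 ∧
      (∃ m ∈ P.parts, (∀ i ∈ P.parts, i ≤ m) ∧ 2 ≤ P.parts.count m)} := by
    apply Nat.card_congr
    apply Equiv.subtypeEquivRight
    intro P
    rw [and_assoc]
  have e1 : Nat.card {P : Nat.Partition n // ((∀ i ∈ P.parts, 2 ≤ i) ∧ P.parts.count 2 ≤ 1) ∧
      ¬ (∃ m ∈ P.parts, (∀ i ∈ P.parts, i ≤ m) ∧ 2 ≤ P.parts.count m)} = Acard (n - 1) := by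
    rw [← card_maxUniq n hn]
    apply Nat.card_congr
    apply Equiv.subtypeEquivRight
    intro P
    have hne : P.parts ≠ 0 := sum_pos_ne_zero (by rw [P.parts_sum]; omega)
    have hM := msup_mem hne
    constructor
    · rintro ⟨hA, hnot⟩
      refine ⟨hA, P.parts.sup, hM, fun i hi => Multiset.le_sup hi, ?_⟩
      have h1 : 0 < P.parts.count P.parts.sup := Multiset.count_pos.mpr hM
      by_contra hne1
      exact hnot ⟨P.parts.sup, hM, fun i hi => Multiset.le_sup hi, by omega⟩
    · rintro ⟨hA, m, hm, hub, hcnt1⟩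
      refine ⟨hA, ?_⟩
      rintro ⟨m', hm', hub', hge2⟩
      have hmm : m = m' := le_antisymm (hub' m hm) (hub m' hm')
      rw [hmm] at hcnt1
      omega
  have hAn : (Acard n : ℤ) = Az (n : ℤ) := by
    rw [Az, if_pos (by positivity)]
    norm_num
  have hAn1 : (Acard (n-1) : ℤ) = Az ((n:ℤ) - 1) := by
    rw [Az, if_pos (by omega)]
    congr 2
    omega
  rw [e0, e1] at hsplit
  have key : Nat.card {P : Nat.Partition n // (∀ i ∈ P.parts, 2 ≤ i) ∧ P.parts.count 2 ≤ 1 ∧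
      (∃ m ∈ P.parts, (∀ i ∈ P.parts, i ≤ m) ∧ 2 ≤ P.parts.count m)} + Acard (n-1)
      = Acard n := hsplit
  rw [← hAn, ← hAn1]
  push_cast [← key]
  ring
/-! ### the weight function and the convolution -/

def wz (m : ℤ) : ℤ :=
  if m < 5 then 0 else 1 - (if (2:ℤ) ∣ m then 1 else 0) - (if (3:ℤ) ∣ m then 1 else 0)

noncomputable def Tz (N : ℤ) : ℤ := ∑ m ∈ Finset.Icc (5:ℤ) N, wz m * q5z (N - m)

noncomputable def bz5 (N : ℤ) : ℤ := q2z (N-5) - q2z (N-6) - q2z (N-9) + q2z (N-10)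

lemma wz_lt {m : ℤ} (h : m < 5) : wz m = 0 := if_pos h

lemma wz_val (m : ℤ) (h : 5 ≤ m) :
    wz m = 1 - (if m % 2 = 0 then 1 else 0) - (if m % 3 = 0 then 1 else 0) := by
  rw [wz, if_neg (not_lt.mpr h)]
  have h2 : ((2:ℤ) ∣ m) ↔ m % 2 = 0 := by omega
  have h3 : ((3:ℤ) ∣ m) ↔ m % 3 = 0 := by omega
  rw [if_congr h2 rfl rfl, if_congr h3 rfl rfl]

lemma wz_rec (m : ℤ) (hm : 5 ≤ m) :
    wz m - wz (m-2) - wz (m-3) + wz (m-5)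
      = (if m = 5 then 1 else 0) - (if m = 6 then 1 else 0) := by
  rcases lt_or_ge m 10 with h10 | h10
  · interval_cases m <;> decide
  · rw [wz_val m (by omega), wz_val (m-2) (by omega), wz_val (m-3) (by omega),
      wz_val (m-5) (by omega), if_neg (by omega : ¬ m = 5), if_neg (by omega : ¬ m = 6)]
    split_ifs <;> omega

lemma pz_neg {j : ℤ} (h : j < 0) : pz j = 0 := by
  rw [pz, if_neg (not_le.mpr h)]

lemma q2z_neg {j : ℤ} (h : j < 0) : q2z j = 0 := by
  rw [q2z, pz_neg h, pz_neg (by omega)]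
  ring

lemma Tz_shift (N c : ℤ) (hc : 0 ≤ c) :
    Tz (N - c) = ∑ m ∈ Finset.Icc (5:ℤ) N, wz (m - c) * q5z (N - m) := by
  rw [Tz]
  have hset : Finset.Icc (5 + c) N = (Finset.Icc (5:ℤ) (N - c)).map (addRightEmbedding c) := by
    rw [Finset.map_add_right_Icc]
    congr 1
    ring
  have step : ∑ j ∈ Finset.Icc (5:ℤ) (N - c), wz j * q5z (N - c - j)
      = ∑ m ∈ Finset.Icc (5 + c) N, wz (m - c) * q5z (N - m) := by
    rw [hset, Finset.sum_map]
    apply Finset.sum_congr rfl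
    intro j hj
    simp only [addRightEmbedding_apply]
    rw [show j + c - c = j by ring, show N - (j + c) = N - c - j by ring]
  rw [step]
  apply Finset.sum_subset
  · apply Finset.Icc_subset_Icc_left
    omega
  · intro m hm hnot
    have : m - c < 5 := by
      simp only [Finset.mem_Icc] at hm hnot
      omega
    rw [wz_lt this, zero_mul]

lemma Tz_rec (N : ℤ) :
    Tz N - Tz (N-2) - Tz (N-3) + Tz (N-5)
      = (if 5 ≤ N then q5z (N-5) else 0) - (if 6 ≤ N then q5z (N-6) else 0) := by
  rw [Tz_shift N 2 (by norm_num), Tz_shift N 3 (by norm_num), Tz_shift N 5 (by norm_num), Tz]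
  rw [← Finset.sum_sub_distrib, ← Finset.sum_sub_distrib, ← Finset.sum_add_distrib]
  have step : ∀ m ∈ Finset.Icc (5:ℤ) N,
      wz m * q5z (N - m) - wz (m - 2) * q5z (N - m) - wz (m - 3) * q5z (N - m)
        + wz (m - 5) * q5z (N - m)
      = (if m = 5 then q5z (N - m) else 0) - (if m = 6 then q5z (N - m) else 0) := by
    intro m hm
    have hm5 : 5 ≤ m := (Finset.mem_Icc.mp hm).1
    have := wz_rec m hm5
    have expand : wz m * q5z (N - m) - wz (m - 2) * q5z (N - m) - wz (m - 3) * q5z (N - m)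
        + wz (m - 5) * q5z (N - m)
        = (wz m - wz (m-2) - wz (m-3) + wz (m-5)) * q5z (N - m) := by ring
    rw [expand, this]
    split_ifs <;> ring
  rw [Finset.sum_congr rfl step, Finset.sum_sub_distrib]
  rw [Finset.sum_ite_eq' (Finset.Icc (5:ℤ) N) 5 (fun m => q5z (N - m))]
  rw [Finset.sum_ite_eq' (Finset.Icc (5:ℤ) N) 6 (fun m => q5z (N - m))]
  simp only [Finset.mem_Icc]
  norm_num

lemma bz5_rec (N : ℤ) :
    bz5 N - bz5 (N-2) - bz5 (N-3) + bz5 (N-5) = q5z (N-5) - q5z (N-6) := by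
  simp only [bz5, q5z, r4z, r3z]
  ring_nf

lemma p_zero : p 0 = 1 := by
  rw [p]
  exact Fintype.card_eq_one_iff.mpr ⟨default, fun P => Subsingleton.elim P default⟩

lemma q2z_zero : q2z 0 = 1 := by
  rw [q2z, pz, pz, if_pos le_rfl, if_neg (by norm_num)]
  simp [p_zero]

lemma q5z_zero : q5z 0 = 1 := by
  simp only [q5z, r4z, r3z]
  rw [q2z_zero]
  rw [q2z_neg (by norm_num), q2z_neg (by norm_num), q2z_neg (by norm_num),
    q2z_neg (by norm_num), q2z_neg (by norm_num), q2z_neg (by norm_num),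
    q2z_neg (by norm_num)]
  ring

lemma Tz_eq_bz5 (N : ℤ) : Tz N = bz5 N := by
  have base : ∀ M : ℤ, M < 5 → Tz M = bz5 M := by
    intro M hM
    rw [Tz, Finset.Icc_eq_empty (by omega), Finset.sum_empty, bz5,
      q2z_neg (by omega), q2z_neg (by omega), q2z_neg (by omega), q2z_neg (by omega)]
    ring
  have h5 : Tz 5 = bz5 5 := by
    rw [Tz, show Finset.Icc (5:ℤ) 5 = {5} from Finset.Icc_self 5, Finset.sum_singleton]
    rw [show (5:ℤ) - 5 = 0 by ring, q5z_zero]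
    rw [bz5]
    rw [show (5:ℤ) - 5 = 0 by ring, q2z_zero,
      q2z_neg (by norm_num), q2z_neg (by norm_num), q2z_neg (by norm_num)]
    rw [show wz 5 = 1 by decide]
    ring
  have main : ∀ k : ℕ, ∀ M : ℤ, M ≤ 5 + k → Tz M = bz5 M := by
    intro k
    induction k with
    | zero =>
      intro M hM
      rcases lt_or_ge M 5 with h | h
      · exact base M h
      · have : M = 5 := by omega
        rw [this]; exact h5
    | succ k ih =>
      intro M hM
      rcases le_or_gt M (5 + k) with h | h
      · exact ih M h
      · have hM6 : 6 ≤ M := by omega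
        have hT := Tz_rec M
        have hb := bz5_rec M
        rw [if_pos (by omega : (5:ℤ) ≤ M), if_pos (by omega : (6:ℤ) ≤ M)] at hT
        have e2 := ih (M - 2) (by omega)
        have e3 := ih (M - 3) (by omega)
        have e5 := ih (M - 5) (by omega)
        rw [e2, e3, e5] at hT
        linarith
  rcases lt_or_ge N 5 with h | h
  · exact base N h
  · exact main (N - 5).toNat N (by omega)
/-! ### expressing S via counts -/

lemma count_le_N {N : ℕ} (P : Nat.Partition N) (k : ℕ) : P.parts.count k ≤ N := by
  calc P.parts.count k ≤ Multiset.card P.parts := Multiset.count_le_card k P.parts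
    _ ≤ P.parts.sum := mcard_le_sum (fun i hi => P.parts_pos hi)
    _ = N := P.parts_sum

lemma S_eq_sum_card (N k : ℕ) :
    S 5 N k = ∑ j ∈ Finset.Icc 1 N,
      Nat.card {P : Nat.Partition N // (∀ i ∈ P.parts, 5 ≤ i) ∧ j ≤ P.parts.count k} := by
  rw [S]
  have per : ∀ P : Nat.Partition N,
      (if ∀ i ∈ P.parts, 5 ≤ i then P.parts.count k else 0)
        = ∑ j ∈ Finset.Icc 1 N,
            (if (∀ i ∈ P.parts, 5 ≤ i) ∧ j ≤ P.parts.count k then 1 else 0) := by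
    intro P
    by_cases h : ∀ i ∈ P.parts, 5 ≤ i
    · rw [if_pos h]
      have hcong : ∀ j ∈ Finset.Icc 1 N,
          (if (∀ i ∈ P.parts, 5 ≤ i) ∧ j ≤ P.parts.count k then (1:ℕ) else 0)
            = if j ≤ P.parts.count k then 1 else 0 :=
        fun j _ => if_congr (and_iff_right h) rfl rfl
      rw [Finset.sum_congr rfl hcong, ← Finset.card_filter]
      have : (Finset.Icc 1 N).filter (fun j => j ≤ P.parts.count k)
          = Finset.Icc 1 (P.parts.count k) := by
        ext j
        simp only [Finset.mem_filter, Finset.mem_Icc]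
        have := count_le_N P k
        omega
      rw [this, Nat.card_Icc]
      omega
    · simp [h]
  rw [Finset.sum_congr rfl (fun P _ => per P), Finset.sum_comm]
  apply Finset.sum_congr rfl
  intro j _
  rw [← Finset.card_filter, Nat.card_eq_fintype_card, Fintype.card_subtype]

lemma card_ge5_count (N k j : ℕ) (hk : 5 ≤ k) (hj : 1 ≤ j) :
    (Nat.card {P : Nat.Partition N // (∀ i ∈ P.parts, 5 ≤ i) ∧ j ≤ P.parts.count k} : ℤ)
      = czGE 5 ((N:ℤ) - j * k) := by
  rcases le_or_gt (j * k) N with hle | hlt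
  · obtain ⟨d, rfl⟩ : ∃ d : ℕ, N = d + j * k := ⟨N - j * k, by omega⟩
    have key := card_remove (Multiset.replicate j k)
      (fun i hi => by rw [Multiset.eq_of_mem_replicate hi]; omega) d
      (fun s => ∀ i ∈ s, 5 ≤ i) (fun s => ∀ i ∈ s, 5 ≤ i) ?_
    · rw [Multiset.sum_replicate, smul_eq_mul] at key
      have e : Nat.card {P : Nat.Partition (d + j * k) //
            (∀ i ∈ P.parts, 5 ≤ i) ∧ j ≤ P.parts.count k}
          = Nat.card {P : Nat.Partition (d + j * k) //
            Multiset.replicate j k ≤ P.parts ∧ ∀ i ∈ P.parts, 5 ≤ i} := by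
        apply Nat.card_congr
        apply Equiv.subtypeEquivRight
        intro P
        rw [← Multiset.le_count_iff_replicate_le, and_comm]
      have harg : ((d + j * k : ℕ) : ℤ) - (j:ℤ) * (k:ℤ) = (d : ℤ) := by push_cast; ring
      rw [e, key, harg, czGE, if_pos (by positivity : (0:ℤ) ≤ (d:ℤ)), Int.toNat_natCast]
      rfl
    · intro t
      constructor
      · intro h i hi; exact h i (Multiset.mem_add.mpr (Or.inr hi))
      · intro h i hi
        rcases Multiset.mem_add.mp hi with hi | hi
        · rw [Multiset.eq_of_mem_replicate hi]; omega
        · exact h i hi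
  · have hcast : ((N:ℤ)) - (j:ℤ) * (k:ℤ) < 0 := by
      have : (N:ℤ) < (j:ℤ) * (k:ℤ) := by exact_mod_cast hlt
      linarith
    rw [czGE_neg 5 hcast]
    norm_cast
    rw [Nat.card_eq_zero]
    left
    constructor
    rintro ⟨P, hge, hcnt⟩
    have hrep : Multiset.replicate j k ≤ P.parts :=
      Multiset.le_count_iff_replicate_le.mp hcnt
    have := msum_le_of_le hrep
    rw [P.parts_sum, Multiset.sum_replicate, smul_eq_mul] at this
    exact absurd this (not_le.mpr hlt)

/-! ### the divisor weight -/

lemma small_div' (m : ℕ) (hm : 1 ≤ m) :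
    (∑ d ∈ m.divisors.filter (fun d => 5 ≤ d), ArithmeticFunction.moebius d)
      = - wz (m : ℤ) := by
  have total : ∑ d ∈ m.divisors, ArithmeticFunction.moebius d
      = if m = 1 then 1 else 0 := by
    have := congrArg (fun f : ArithmeticFunction ℤ => f m)
      ArithmeticFunction.moebius_mul_coe_zeta
    simp only [ArithmeticFunction.coe_mul_zeta_apply] at this
    rw [this, ArithmeticFunction.one_apply]
  have hsplit := Finset.sum_filter_add_sum_filter_not m.divisors (fun d => 5 ≤ d)
    (fun d => ArithmeticFunction.moebius d)
  rw [total] at hsplit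
  have hsmallset : m.divisors.filter (fun d => ¬ 5 ≤ d)
      = ({1, 2, 3, 4} : Finset ℕ).filter (fun d => d ∣ m) := by
    ext d
    simp only [Finset.mem_filter, Nat.mem_divisors, Finset.mem_insert, Finset.mem_singleton]
    constructor
    · rintro ⟨⟨hdvd, _⟩, hlt⟩
      have : 1 ≤ d := Nat.pos_of_dvd_of_pos hdvd (by omega)
      exact ⟨by omega, hdvd⟩
    · rintro ⟨hmem, hdvd⟩
      exact ⟨⟨hdvd, by omega⟩, by omega⟩
  have hm2 : ArithmeticFunction.moebius 2 = -1 :=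
    ArithmeticFunction.moebius_apply_prime (by norm_num)
  have hm3 : ArithmeticFunction.moebius 3 = -1 :=
    ArithmeticFunction.moebius_apply_prime (by norm_num)
  have hm4 : ArithmeticFunction.moebius 4 = 0 :=
    ArithmeticFunction.moebius_eq_zero_of_not_squarefree (by decide)
  have hsmall : ∑ d ∈ m.divisors.filter (fun d => ¬ 5 ≤ d),
      ArithmeticFunction.moebius d
      = 1 - (if 2 ∣ m then 1 else 0) - (if 3 ∣ m then 1 else 0) := by
    rw [hsmallset, Finset.sum_filter]
    rw [show ({1, 2, 3, 4} : Finset ℕ) = insert 1 (insert 2 (insert 3 {4})) from rfl]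
    rw [Finset.sum_insert (by decide), Finset.sum_insert (by decide),
      Finset.sum_insert (by decide), Finset.sum_singleton]
    rw [if_pos (one_dvd m), ArithmeticFunction.moebius_apply_one, hm2, hm3, hm4]
    split_ifs <;> ring
  have hwz : wz (m : ℤ) = if (m:ℤ) < 5 then 0 else
      1 - (if (2:ℤ) ∣ (m:ℤ) then 1 else 0) - (if (3:ℤ) ∣ (m:ℤ) then 1 else 0) := rfl
  have hd2 : ((2:ℤ) ∣ (m:ℤ)) ↔ 2 ∣ m := Int.natCast_dvd_natCast
  have hd3 : ((3:ℤ) ∣ (m:ℤ)) ↔ 3 ∣ m := Int.natCast_dvd_natCast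
  have h5iff : ((m:ℤ) < 5) ↔ m < 5 := by omega
  rw [hwz, if_congr hd2 rfl rfl, if_congr hd3 rfl rfl, if_congr h5iff rfl rfl]
  by_cases hlt : m < 5
  · rw [if_pos hlt]
    interval_cases m
    · rw [if_pos rfl] at hsplit
      rw [if_neg (by decide), if_neg (by decide)] at hsmall
      linarith
    · rw [if_neg (by decide)] at hsplit
      rw [if_pos (by decide), if_neg (by decide)] at hsmall
      linarith
    · rw [if_neg (by decide)] at hsplit
      rw [if_neg (by decide), if_pos (by decide)] at hsmall
      linarith
    · rw [if_neg (by decide)] at hsplit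
      rw [if_pos (by decide), if_neg (by decide)] at hsmall
      linarith
  · rw [if_neg hlt, if_neg (by omega : ¬ m = 1)] at *
    by_cases h2 : 2 ∣ m <;> by_cases h3 : 3 ∣ m <;>
      [rw [if_pos h2, if_pos h3] at hsmall ⊢;
       rw [if_pos h2, if_neg h3] at hsmall ⊢;
       rw [if_neg h2, if_pos h3] at hsmall ⊢;
       rw [if_neg h2, if_neg h3] at hsmall ⊢] <;> linarith
/-! ### the exchange and the final Möbius identity -/

lemma Tz_nat (N : ℕ) :
    Tz (N:ℤ) = ∑ m ∈ Finset.Icc 1 N, wz (m:ℤ) * q5z ((N:ℤ) - m) := by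
  rw [Tz]
  rw [← Finset.sum_filter_add_sum_filter_not (Finset.Icc 1 N) (fun m => 5 ≤ m)
    (fun m => wz (m:ℤ) * q5z ((N:ℤ) - m))]
  have hzero : ∑ m ∈ (Finset.Icc 1 N).filter (fun m => ¬ 5 ≤ m),
      wz (m:ℤ) * q5z ((N:ℤ) - m) = 0 := by
    apply Finset.sum_eq_zero
    intro m hm
    simp only [Finset.mem_filter, Finset.mem_Icc] at hm
    rw [wz_lt (by omega : (m:ℤ) < 5), zero_mul]
  rw [hzero, add_zero]
  symm
  apply Finset.sum_nbij' (fun m : ℕ => (m:ℤ)) (fun m : ℤ => m.toNat)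
  · intro a ha
    simp only [Finset.mem_filter, Finset.mem_Icc] at ha
    simp only [Finset.mem_Icc]
    omega
  · intro a ha
    simp only [Finset.mem_Icc] at ha
    simp only [Finset.mem_filter, Finset.mem_Icc]
    omega
  · intro a _; exact Int.toNat_natCast a
  · intro a ha
    simp only [Finset.mem_Icc] at ha
    omega
  · intro a _; rfl

lemma neg_S_moebius_sum (N : ℕ) :
    -∑ k ∈ Finset.Icc 5 N, (S 5 N k : ℤ) * ArithmeticFunction.moebius k = Tz (N : ℤ) := by
  have step1 : ∀ k ∈ Finset.Icc 5 N, (S 5 N k : ℤ) * ArithmeticFunction.moebius k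
      = ∑ j ∈ Finset.Icc 1 N, czGE 5 ((N:ℤ) - j * k) * ArithmeticFunction.moebius k := by
    intro k hk
    simp only [Finset.mem_Icc] at hk
    rw [S_eq_sum_card N k]
    push_cast
    rw [Finset.sum_mul]
    apply Finset.sum_congr rfl
    intro j hj
    simp only [Finset.mem_Icc] at hj
    rw [card_ge5_count N k j hk.1 hj.1]
  rw [Finset.sum_congr rfl step1]
  rw [← Finset.sum_product' (Finset.Icc 5 N) (Finset.Icc 1 N)
    (fun k j => czGE 5 ((N:ℤ) - j * k) * ArithmeticFunction.moebius k)]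
  rw [← Finset.sum_filter_add_sum_filter_not ((Finset.Icc 5 N) ×ˢ (Finset.Icc 1 N))
    (fun q => q.2 * q.1 ≤ N) (fun q => czGE 5 ((N:ℤ) - q.2 * q.1) * ArithmeticFunction.moebius q.1)]
  have hzero : ∑ q ∈ ((Finset.Icc 5 N) ×ˢ (Finset.Icc 1 N)).filter (fun q => ¬ q.2 * q.1 ≤ N),
      czGE 5 ((N:ℤ) - q.2 * q.1) * ArithmeticFunction.moebius q.1 = 0 := by
    apply Finset.sum_eq_zero
    intro q hq
    simp only [Finset.mem_filter] at hq
    have : ((N:ℤ)) - (q.2:ℤ) * (q.1:ℤ) < 0 := by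
      have : (N:ℤ) < (q.2:ℤ) * (q.1:ℤ) := by exact_mod_cast Nat.lt_of_not_le hq.2
      linarith
    rw [czGE_neg 5 this, zero_mul]
  rw [hzero, add_zero]
  -- reindex to (m, d) with d ∣ m
  have hbij : ∑ q ∈ ((Finset.Icc 5 N) ×ˢ (Finset.Icc 1 N)).filter (fun q => q.2 * q.1 ≤ N),
      czGE 5 ((N:ℤ) - q.2 * q.1) * ArithmeticFunction.moebius q.1
      = ∑ x ∈ (Finset.Icc 1 N).sigma (fun m => m.divisors.filter (fun d => 5 ≤ d)),
          czGE 5 ((N:ℤ) - x.1) * ArithmeticFunction.moebius x.2 := by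
    apply Finset.sum_nbij' (fun q : ℕ × ℕ => (⟨q.2 * q.1, q.1⟩ : Σ _ : ℕ, ℕ))
      (fun x : Σ _ : ℕ, ℕ => (x.2, x.1 / x.2))
    · rintro ⟨k, j⟩ hq
      simp only [Finset.mem_filter, Finset.mem_product, Finset.mem_Icc] at hq
      simp only [Finset.mem_sigma, Finset.mem_Icc, Finset.mem_filter, Nat.mem_divisors]
      refine ⟨⟨Nat.one_le_iff_ne_zero.mpr ?_, hq.2⟩, ⟨⟨j, by ring⟩, ?_⟩, hq.1.1.1⟩
      · have := hq.1.1.1; have := hq.1.2.1; positivity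
      · have := hq.1.1.1; have := hq.1.2.1; positivity
    · rintro ⟨m, d⟩ hx
      simp only [Finset.mem_sigma, Finset.mem_Icc, Finset.mem_filter, Nat.mem_divisors] at hx
      obtain ⟨⟨hm1, hmN⟩, ⟨hdvd, hm0⟩, hd5⟩ := hx
      simp only [Finset.mem_filter, Finset.mem_product, Finset.mem_Icc]
      have hd0 : 0 < d := by omega
      have hdm : d ≤ m := Nat.le_of_dvd (by omega) hdvd
      refine ⟨⟨⟨hd5, by omega⟩, ?_, ?_⟩, ?_⟩
      · exact Nat.one_le_div_iff hd0 |>.mpr hdm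
      · calc m / d ≤ m := Nat.div_le_self m d
          _ ≤ N := hmN
      · rw [Nat.div_mul_cancel hdvd]; exact hmN
    · rintro ⟨k, j⟩ hq
      simp only [Finset.mem_filter, Finset.mem_product, Finset.mem_Icc] at hq
      have hk0 : 0 < k := by omega
      simp only [Nat.mul_div_cancel _ hk0]
    · rintro ⟨m, d⟩ hx
      simp only [Finset.mem_sigma, Finset.mem_Icc, Finset.mem_filter, Nat.mem_divisors] at hx
      obtain ⟨⟨hm1, hmN⟩, ⟨hdvd, hm0⟩, hd5⟩ := hx
      show (⟨m / d * d, d⟩ : Σ _ : ℕ, ℕ) = ⟨m, d⟩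
      rw [Nat.div_mul_cancel hdvd]
    · rintro ⟨k, j⟩ hq
      push_cast
      ring_nf
  rw [hbij, Finset.sum_sigma]
  have step2 : ∀ m ∈ Finset.Icc 1 N,
      ∑ d ∈ m.divisors.filter (fun d => 5 ≤ d),
        czGE 5 ((N:ℤ) - m) * ArithmeticFunction.moebius d
      = - (wz (m:ℤ) * q5z ((N:ℤ) - m)) := by
    intro m hm
    simp only [Finset.mem_Icc] at hm
    rw [← Finset.mul_sum, small_div' m hm.1, czGE_5]
    ring
  rw [Finset.sum_congr rfl step2, Finset.sum_neg_distrib, Tz_nat]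
  ring
theorem card_no_ones_at_most_one_two_max_repeated_eq_neg_sum_S5_moebius
    (n : ℕ) (hn : 6 ≤ n) :
    (Nat.card {P : Nat.Partition n //
        1 ∉ P.parts ∧ P.parts.count 2 ≤ 1 ∧
        ∃ m ∈ P.parts, (∀ i ∈ P.parts, i ≤ m) ∧ 2 ≤ P.parts.count m} : ℤ) =
      -∑ k ∈ Finset.Icc 5 (n + 5),
          (S 5 (n + 5) k : ℤ) * ArithmeticFunction.moebius k ∧
    ((p n : ℤ) - 2 * (p (n - 1) : ℤ) + (p (n - 2) : ℤ)) -
        ((p (n - 4) : ℤ) - 2 * (p (n - 5) : ℤ) + (p (n - 6) : ℤ)) =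
      -∑ k ∈ Finset.Icc 5 (n + 5),
          (S 5 (n + 5) k : ℤ) * ArithmeticFunction.moebius k := by
  have hmoeb := neg_S_moebius_sum (n+5)
  have hTz := Tz_eq_bz5 (((n+5:ℕ)):ℤ)
  have hbz : bz5 (((n+5:ℕ)):ℤ)
      = q2z (n:ℤ) - q2z ((n:ℤ)-1) - q2z ((n:ℤ)-4) + q2z ((n:ℤ)-5) := by
    rw [bz5]
    push_cast
    ring_nf
  have hRHS : -∑ k ∈ Finset.Icc 5 (n + 5), (S 5 (n + 5) k : ℤ) * ArithmeticFunction.moebius k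
      = q2z (n:ℤ) - q2z ((n:ℤ)-1) - q2z ((n:ℤ)-4) + q2z ((n:ℤ)-5) := by
    rw [hmoeb, hTz, hbz]
  have hp : ∀ k : ℕ, k ≤ n → (p (n - k) : ℤ) = pz ((n:ℤ) - k) := by
    intro k hk
    rw [pz, if_pos (by omega)]
    exact_mod_cast congrArg (fun x => ((p x : ℕ) : ℤ)) (by omega : n - k = ((n:ℤ) - k).toNat)
  constructor
  · -- the cardinality statement
    have hcard : Nat.card {P : Nat.Partition n //
        1 ∉ P.parts ∧ P.parts.count 2 ≤ 1 ∧
        ∃ m ∈ P.parts, (∀ i ∈ P.parts, i ≤ m) ∧ 2 ≤ P.parts.count m}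
        = Nat.card {P : Nat.Partition n // (∀ i ∈ P.parts, 2 ≤ i) ∧ P.parts.count 2 ≤ 1 ∧
          (∃ m ∈ P.parts, (∀ i ∈ P.parts, i ≤ m) ∧ 2 ≤ P.parts.count m)} := by
      apply Nat.card_congr
      apply Equiv.subtypeEquivRight
      intro P
      have hiff : 1 ∉ P.parts ↔ ∀ i ∈ P.parts, 2 ≤ i := by
        constructor
        · intro h1 i hi
          have hpos := P.parts_pos hi
          have hne : i ≠ 1 := fun e => h1 (e ▸ hi)
          omega
        · intro h hmem
          have := h 1 hmem
          omega
      rw [hiff]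
    rw [hcard, hRHS]
    have := cardB n hn
    rw [this, Az_eq, Az_eq]
    push_cast
    ring_nf
  · -- the partition-function statement
    rw [hRHS]
    have e0 := hp 0 (by omega)
    have e1 := hp 1 (by omega)
    have e2 := hp 2 (by omega)
    have e4 := hp 4 (by omega)
    have e5 := hp 5 (by omega)
    have e6 := hp 6 (by omega)
    norm_num at e0
    push_cast at e0 e1 e2 e4 e5 e6
    have expand : q2z (n:ℤ) - q2z ((n:ℤ)-1) - q2z ((n:ℤ)-4) + q2z ((n:ℤ)-5)
        = pz (n:ℤ) - 2*pz ((n:ℤ)-1) + pz ((n:ℤ)-2)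
          - (pz ((n:ℤ)-4) - 2*pz ((n:ℤ)-5) + pz ((n:ℤ)-6)) := by
      simp only [q2z]
      ring_nf
    rw [expand, ← e0, ← e1, ← e2, ← e4, ← e5, ← e6]
end

section
/- For every integer n ≥ 0, ∑_{k=2}^{n+2} S^{(2)}_{n+2,k} · φ(k) = S^{(1)}_{n+1,1}, i.e., this sum equals the total number of parts equal to 1 in all partitions of n+1. -/
open Finset

/-- partitions of n with all parts ≥ r -/
def Pr (r n : ℕ) : ℕ :=
  ∑ P : Nat.Partition n, if ∀ i ∈ P.parts, r ≤ i then 1 else 0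

def removeOne (k n : ℕ) (hk : 0 < k) :
    {P : Nat.Partition (n + k) // k ∈ P.parts} ≃ Nat.Partition n where
  toFun P := ⟨P.1.parts.erase k,
    fun hi => P.1.parts_pos (Multiset.mem_of_mem_erase hi),
    by
      have h := P.1.parts_sum
      rw [← Multiset.cons_erase P.2, Multiset.sum_cons] at h
      omega⟩
  invFun Q := ⟨⟨k ::ₘ Q.parts,
    fun hi => by
      rcases Multiset.mem_cons.1 hi with h | h
      · omega
      · exact Q.parts_pos h,
    by rw [Multiset.sum_cons, Q.parts_sum]; omega⟩,
    Multiset.mem_cons_self _ _⟩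
  left_inv P := by
    apply Subtype.ext
    apply Nat.Partition.ext
    exact Multiset.cons_erase P.2
  right_inv Q := by
    apply Nat.Partition.ext
    simp [Multiset.erase_cons_head]

lemma S_rec (r k n : ℕ) (hk : 0 < k) (hrk : r ≤ k) :
    S r (n + k) k = Pr r n + S r n k := by
  classical
  set g : Nat.Partition (n + k) → ℕ :=
    fun P => if ∀ i ∈ P.parts, r ≤ i then P.parts.count k else 0 with hg
  have h1 : S r (n + k) k = ∑ P : {P : Nat.Partition (n + k) // k ∈ P.parts}, g P.1 := by
    rw [S]
    rw [← Fintype.sum_subtype_add_sum_subtype (fun P => k ∈ P.parts) g]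
    have h0 : ∑ P : {P : Nat.Partition (n + k) // ¬ k ∈ P.parts}, g P.1 = 0 := by
      apply Finset.sum_eq_zero
      intro P _
      simp only [hg]
      rw [Multiset.count_eq_zero_of_notMem P.2]
      simp
    rw [h0, add_zero]
  rw [h1, ← Equiv.sum_comp (removeOne k n hk).symm (fun P => g P.1)]
  have h2 : ∀ Q : Nat.Partition n,
      g ((removeOne k n hk).symm Q).1 =
        (if ∀ i ∈ Q.parts, r ≤ i then 1 else 0) +
        (if ∀ i ∈ Q.parts, r ≤ i then Q.parts.count k else 0) := by
    intro Q
    simp only [hg, removeOne, Equiv.coe_fn_symm_mk]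
    have hcond : (∀ i ∈ k ::ₘ Q.parts, r ≤ i) ↔ (∀ i ∈ Q.parts, r ≤ i) := by
      constructor
      · intro h i hi; exact h i (Multiset.mem_cons_of_mem hi)
      · intro h i hi
        rcases Multiset.mem_cons.1 hi with h' | h'
        · omega
        · exact h i h'
    rw [if_congr hcond rfl rfl]
    by_cases hc : ∀ i ∈ Q.parts, r ≤ i
    · rw [if_pos hc, if_pos hc, if_pos hc, Multiset.count_cons_self]; omega
    · simp [hc]
  rw [Finset.sum_congr rfl (fun Q _ => h2 Q), Finset.sum_add_distrib]
  rfl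

lemma S_of_gt (r n k : ℕ) (h : n < k) : S r n k = 0 := by
  apply Finset.sum_eq_zero
  intro P _
  have hm : k ∉ P.parts := by
    intro hm
    have := Multiset.le_sum_of_mem hm
    rw [P.parts_sum] at this
    omega
  rw [Multiset.count_eq_zero_of_notMem hm]
  simp

lemma S_eq_sum (r k : ℕ) (hk : 0 < k) (hrk : r ≤ k) (n : ℕ) :
    S r n k = ∑ m ∈ Icc 1 n, if k ∣ m then Pr r (n - m) else 0 := by
  induction n using Nat.strong_induction_on with
  | _ n ih =>
  by_cases h : k ≤ n
  · obtain ⟨n', rfl⟩ : ∃ n', n = n' + k := ⟨n - k, by omega⟩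
    rw [S_rec r k n' hk hrk, ih n' (by omega)]
    have hsplit : Finset.Icc 1 (n' + k) = Finset.Icc 1 k ∪ Finset.Icc (k + 1) (n' + k) := by
      ext a
      simp only [Finset.mem_Icc, Finset.mem_union]
      omega
    rw [hsplit, Finset.sum_union (by
      apply Finset.disjoint_left.2
      intro a ha hb
      simp only [Finset.mem_Icc] at ha hb
      omega)]
    have h1 : ∑ m ∈ Finset.Icc 1 k, (if k ∣ m then Pr r (n' + k - m) else 0) = Pr r n' := by
      rw [Finset.sum_eq_single_of_mem k (by simp [Finset.mem_Icc]; omega)]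
      · simp
      · intro m hm hne
        rw [if_neg]
        intro hdvd
        simp only [Finset.mem_Icc] at hm
        have := Nat.le_of_dvd (by omega) hdvd
        omega
    have h2 : ∑ m ∈ Finset.Icc (k + 1) (n' + k), (if k ∣ m then Pr r (n' + k - m) else 0) =
        ∑ m ∈ Finset.Icc 1 n', (if k ∣ m then Pr r (n' - m) else 0) := by
      apply Finset.sum_nbij' (fun m => m - k) (fun m => m + k)
      · intro a ha; simp only [Finset.mem_Icc] at *; omega
      · intro a ha; simp only [Finset.mem_Icc] at *; omega
      · intro a ha; simp only [Finset.mem_Icc] at ha; omega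
      · intro a ha; simp only [Finset.mem_Icc] at ha; omega
      · intro a ha
        simp only [Finset.mem_Icc] at ha
        have hd : k ∣ a ↔ k ∣ a - k := by
          constructor
          · intro hd; exact (Nat.dvd_sub hd dvd_rfl)
          · intro hd; have := Nat.dvd_add hd (dvd_refl k); rwa [Nat.sub_add_cancel (by omega)] at this
        have harg : n' + k - a = n' - (a - k) := by omega
        rw [harg, if_congr hd rfl rfl]
    rw [h1, h2]
  · rw [S_of_gt r _ k (by omega)]
    symm
    apply Finset.sum_eq_zero
    intro m hm
    simp only [Finset.mem_Icc] at hm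
    rw [if_neg]
    intro hdvd
    have := Nat.le_of_dvd (by omega) hdvd
    omega

lemma Pr_one (t : ℕ) : Pr 1 t = p t := by
  rw [Pr, p, Fintype.card]
  rw [Finset.card_eq_sum_ones]
  apply Finset.sum_congr rfl
  intro P _
  rw [if_pos]
  intro i hi
  exact P.parts_pos hi

lemma Pr_two (t : ℕ) : Pr 2 t = ∑ P : Nat.Partition t, if 1 ∉ P.parts then 1 else 0 := by
  apply Finset.sum_congr rfl
  intro P _
  apply if_congr _ rfl rfl
  constructor
  · intro h h1; have := h 1 h1; omega
  · intro h i hi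
    have h1 := P.parts_pos hi
    have : i ≠ 1 := fun he => h (he ▸ hi)
    omega

lemma p_rec (n : ℕ) : p (n + 1) = Pr 2 (n + 1) + p n := by
  classical
  have hcard : p (n + 1) = ∑ P : Nat.Partition (n + 1), (1 : ℕ) := by
    rw [p, Fintype.card, Finset.card_eq_sum_ones]
  rw [hcard, ← Fintype.sum_subtype_add_sum_subtype (fun P : Nat.Partition (n + 1) => 1 ∈ P.parts)
      (fun _ => (1 : ℕ))]
  have h1 : ∑ _P : {P : Nat.Partition (n + 1) // 1 ∈ P.parts}, (1 : ℕ) = p n := by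
    rw [← Finset.card_eq_sum_ones, ← Fintype.card, Fintype.card_congr (removeOne 1 n one_pos), p]
  have h2 : ∑ _P : {P : Nat.Partition (n + 1) // 1 ∉ P.parts}, (1 : ℕ) = Pr 2 (n + 1) := by
    rw [Pr_two, Finset.sum_ite, Finset.sum_const_zero, add_zero, Finset.sum_const,
      Finset.sum_const, ← Fintype.card, Fintype.card_subtype]
  rw [h1, h2, add_comm]

lemma p_eq_sum (N : ℕ) : p N = ∑ s ∈ Finset.range (N + 1), Pr 2 s := by
  induction N with
  | zero =>
    rw [Finset.sum_range_one, p, Pr, Fintype.card_unique, Fintype.sum_unique, if_pos]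
    intro i hi
    simp at hi
  | succ N ih =>
    rw [Finset.sum_range_succ, ← ih, p_rec, add_comm]

lemma final (N : ℕ) : ∑ t ∈ Finset.range N, Pr 2 t * (N - t) = ∑ t ∈ Finset.range N, p t := by
  induction N with
  | zero => simp
  | succ N ih =>
    have h1 : ∀ t ∈ Finset.range (N + 1), Pr 2 t * (N + 1 - t) = Pr 2 t * (N - t) + Pr 2 t := by
      intro t ht
      simp only [Finset.mem_range] at ht
      have : N + 1 - t = (N - t) + 1 := by omega
      rw [this, Nat.mul_succ]
    rw [Finset.sum_congr rfl h1, Finset.sum_add_distrib, ← p_eq_sum,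
      Finset.sum_range_succ _ N, Nat.sub_self, Nat.mul_zero, add_zero, ih,
      Finset.sum_range_succ _ N]

lemma totient_sum (m N : ℕ) (hm : 1 ≤ m) (hmN : m ≤ N) :
    ∑ k ∈ Finset.Icc 2 N, (if k ∣ m then Nat.totient k else 0) = m - 1 := by
  rw [Finset.sum_ite, Finset.sum_const_zero, add_zero]
  have hfil : Finset.filter (fun k => k ∣ m) (Finset.Icc 2 N) = m.divisors.erase 1 := by
    ext k
    simp only [Finset.mem_filter, Finset.mem_Icc, Finset.mem_erase, Nat.mem_divisors]
    constructor
    · rintro ⟨⟨h2, _⟩, hd⟩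
      exact ⟨by omega, hd, by omega⟩
    · rintro ⟨h1, hd, _⟩
      have hk1 : 1 ≤ k := Nat.pos_of_dvd_of_pos hd (by omega)
      have hkm : k ≤ m := Nat.le_of_dvd (by omega) hd
      exact ⟨⟨by omega, by omega⟩, hd⟩
  rw [hfil]
  have h1m : 1 ∈ m.divisors := Nat.one_mem_divisors.2 (by omega)
  have := Finset.add_sum_erase m.divisors Nat.totient h1m
  rw [Nat.sum_totient, Nat.totient_one] at this
  omega

theorem sum_S2_totient_eq_number_of_ones (n : ℕ) :
    ∑ k ∈ Finset.Icc 2 (n + 2), S 2 (n + 2) k * Nat.totient k =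
      S 1 (n + 1) 1 := by
  classical
  have hL : ∀ k ∈ Finset.Icc 2 (n + 2), S 2 (n + 2) k * Nat.totient k =
      ∑ m ∈ Finset.Icc 1 (n + 2), (if k ∣ m then Pr 2 (n + 2 - m) * Nat.totient k else 0) := by
    intro k hk
    simp only [Finset.mem_Icc] at hk
    rw [S_eq_sum 2 k (by omega) (by omega), Finset.sum_mul]
    apply Finset.sum_congr rfl
    intro m _
    split_ifs <;> simp
  rw [Finset.sum_congr rfl hL, Finset.sum_comm]
  have hInner : ∀ m ∈ Finset.Icc 1 (n + 2),
      ∑ k ∈ Finset.Icc 2 (n + 2), (if k ∣ m then Pr 2 (n + 2 - m) * Nat.totient k else 0) =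
      Pr 2 (n + 2 - m) * (m - 1) := by
    intro m hm
    simp only [Finset.mem_Icc] at hm
    rw [← totient_sum m (n + 2) hm.1 hm.2, Finset.mul_sum]
    apply Finset.sum_congr rfl
    intro k _
    split_ifs <;> simp
  rw [Finset.sum_congr rfl hInner]
  -- reindex t = n + 2 - m
  have hLHS : ∑ m ∈ Finset.Icc 1 (n + 2), Pr 2 (n + 2 - m) * (m - 1) =
      ∑ t ∈ Finset.range (n + 2), Pr 2 t * (n + 2 - t - 1) := by
    apply Finset.sum_nbij' (fun m => n + 2 - m) (fun t => n + 2 - t)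
    · intro a ha; simp only [Finset.mem_Icc, Finset.mem_range] at *; omega
    · intro a ha; simp only [Finset.mem_Icc, Finset.mem_range] at *; omega
    · intro a ha; simp only [Finset.mem_Icc] at ha; omega
    · intro a ha; simp only [Finset.mem_range] at ha; omega
    · intro a ha
      simp only [Finset.mem_Icc] at ha
      congr 1
      omega
  rw [hLHS]
  have hRHS : S 1 (n + 1) 1 = ∑ t ∈ Finset.range (n + 1), p t := by
    rw [S_eq_sum 1 1 one_pos le_rfl]
    rw [show (∑ m ∈ Finset.Icc 1 (n + 1), if 1 ∣ m then Pr 1 (n + 1 - m) else 0) =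
        ∑ m ∈ Finset.Icc 1 (n + 1), p (n + 1 - m) by
      apply Finset.sum_congr rfl
      intro m _
      rw [if_pos (one_dvd m), Pr_one]]
    apply Finset.sum_nbij' (fun m => n + 1 - m) (fun t => n + 1 - t)
    · intro a ha; simp only [Finset.mem_Icc, Finset.mem_range] at *; omega
    · intro a ha; simp only [Finset.mem_Icc, Finset.mem_range] at *; omega
    · intro a ha; simp only [Finset.mem_Icc] at ha; omega
    · intro a ha; simp only [Finset.mem_range] at ha; omega
    · intro a _; rfl
  rw [hRHS, ← final (n + 1)]
  rw [Finset.sum_range_succ _ (n + 1), show n + 2 - (n + 1) - 1 = 0 by omega, Nat.mul_zero,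
    add_zero]
  apply Finset.sum_congr rfl
  intro t ht
  simp only [Finset.mem_range] at ht
  congr 1
  omega
end

section
/- Let α be a prime number. For every integer m ≥ 1, ∑_{d ∣ m} μ(α·d) = -1 if m is a power of α (i.e., m = α^j for some j ≥ 0), and ∑_{d ∣ m} μ(α·d) = 0 otherwise. -/
open Finset

theorem sum_divisors_moebius_prime_mul (α : ℕ) (hα : α.Prime) (m : ℕ) (hm : 1 ≤ m) :
    ((∃ j : ℕ, m = α ^ j) →
      ∑ d ∈ m.divisors, ArithmeticFunction.moebius (α * d) = -1) ∧
    (¬ (∃ j : ℕ, m = α ^ j) →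
      ∑ d ∈ m.divisors, ArithmeticFunction.moebius (α * d) = 0) := by
  have hm0 : m ≠ 0 := by omega
  set k := m.factorization α with hk
  set n := m / α ^ k with hn
  have hmn : α ^ k * n = m := Nat.ordProj_mul_ordCompl_eq_self m α
  have hn0 : 0 < n := Nat.ordCompl_pos α hm0
  have hαn : ¬ α ∣ n := Nat.not_dvd_ordCompl hα hm0
  have hndvd : n ∣ m := Nat.ordCompl_dvd m α
  -- Main computation
  have key : ∑ d ∈ m.divisors, ArithmeticFunction.moebius (α * d)
      = -(if n = 1 then 1 else 0) := by
    have h1 : ∑ d ∈ m.divisors, ArithmeticFunction.moebius (α * d)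
        = ∑ d ∈ n.divisors, ArithmeticFunction.moebius (α * d) := by
      refine (Finset.sum_subset (Nat.divisors_subset_of_dvd hm0 hndvd) ?_).symm
      intro d hd hdn
      have hdm : d ∣ m := (Nat.mem_divisors.mp hd).1
      have hd0 : d ≠ 0 := by rintro rfl; exact hm0 (zero_dvd_iff.mp hdm)
      have hαd : α ∣ d := by
        by_contra hαd
        have hcop : Nat.Coprime d (α ^ k) :=
          Nat.Coprime.pow_right k (((hα.coprime_iff_not_dvd).mpr hαd).symm)
        exact hdn (Nat.mem_divisors.mpr
          ⟨hcop.dvd_of_dvd_mul_left (hmn ▸ hdm), hn0.ne'⟩)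
      apply ArithmeticFunction.moebius_eq_zero_of_not_squarefree
      intro hsq
      obtain ⟨e, rfl⟩ := hαd
      exact hα.not_isUnit (hsq α ⟨e, by ring⟩)
    rw [h1]
    have h2 : ∀ d ∈ n.divisors, ArithmeticFunction.moebius (α * d)
        = -(ArithmeticFunction.moebius d) := by
      intro d hd
      have hdn' : d ∣ n := (Nat.mem_divisors.mp hd).1
      have hcop : Nat.Coprime α d := (Nat.Prime.coprime_iff_not_dvd hα).mpr
        (fun h => hαn (h.trans hdn'))
      rw [ArithmeticFunction.isMultiplicative_moebius.map_mul_of_coprime hcop,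
        ArithmeticFunction.moebius_apply_prime hα]
      ring
    rw [Finset.sum_congr rfl h2, Finset.sum_neg_distrib, neg_inj]
    have := ArithmeticFunction.moebius_mul_coe_zeta
    calc ∑ d ∈ n.divisors, ArithmeticFunction.moebius d
        = (ArithmeticFunction.moebius * ArithmeticFunction.zeta : ArithmeticFunction ℤ) n := by
          rw [ArithmeticFunction.coe_mul_zeta_apply]
      _ = (1 : ArithmeticFunction ℤ) n := by rw [ArithmeticFunction.moebius_mul_coe_zeta]
      _ = if n = 1 then 1 else 0 := ArithmeticFunction.one_apply
  constructor
  · rintro ⟨j, rfl⟩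
    have : n = 1 := by
      rw [hn, hk, hα.factorization_pow, Finsupp.single_eq_same, Nat.div_self (by positivity)]
    rw [key, this, if_pos rfl]
  · intro h
    have : n ≠ 1 := by
      intro h1
      exact h ⟨k, by rw [← hmn, h1, mul_one]⟩
    rw [key, if_neg this, neg_zero]
end
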